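/- Let G=(V,E) be a graph with maximum degree Δ and A,B,C ⊆ V with A ∪ C = V, A ∩ C = B, and no edges between A∖B and C∖B. Given independent dominating sets X of G[A] and Y of G[C], there exists an independent dominating set of G of size at most |X| + |Y| + (Δ+1)·|B|. -/

import Mathlib

/-- `X` is an independent set in `G`. -/
def IsIndepSet' {V : Type*} (G : SimpleGraph V) (X : Set V) : Prop :=
  ∀ x ∈ X, ∀ y ∈ X, ¬ G.Adj x y

/-- `X` is an independent dominating set of the induced subgraph `G[A]`. -/
def IndDomOn {V : Type*} (G : SimpleGraph V) (A X : Set V) : Prop :=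
  X ⊆ A ∧ IsIndepSet' G X ∧ ∀ v ∈ A, ∃ x ∈ X, x = v ∨ G.Adj x v

/-- Combining independent dominating sets `X` of `G[A]` and `Y` of `G[C]` yields an
independent dominating set of `G` of size at most `|X| + |Y| + (Δ + 1) * |B|`. -/
theorem indDom_combine {V : Type*} [Fintype V]
    (G : SimpleGraph V) (Δ : ℕ) (hΔ : ∀ v : V, (G.neighborSet v).ncard ≤ Δ)
    (A B C : Set V) (hAC : A ∪ C = Set.univ) (hB : A ∩ C = B)
    (hsep : ∀ a ∈ A \ B, ∀ c ∈ C \ B, ¬ G.Adj a c)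
    (X Y : Set V) (hX : IndDomOn G A X) (hY : IndDomOn G C Y) :
    ∃ Z : Set V, IndDomOn G Set.univ Z ∧
      Z.ncard ≤ X.ncard + Y.ncard + (Δ + 1) * B.ncard := by
  classical
  obtain ⟨hXA, hXind, hXdom⟩ := hX
  obtain ⟨hYC, hYind, hYdom⟩ := hY
  set S : Set V := (X ∪ Y) \ B with hS
  set N : Set V := ⋃ b ∈ B, insert b (G.neighborSet b) with hN
  -- S is independent
  have hSind : IsIndepSet' G S := by
    rintro x ⟨hx, hxB⟩ y ⟨hy, hyB⟩ hadj
    rcases hx with hx | hx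
    · rcases hy with hy | hy
      · exact hXind x hx y hy hadj
      · exact hsep x ⟨hXA hx, hxB⟩ y ⟨hYC hy, hyB⟩ hadj
    · rcases hy with hy | hy
      · exact hsep y ⟨hXA hy, hyB⟩ x ⟨hYC hx, hxB⟩ hadj.symm
      · exact hYind x hx y hy hadj
  -- every vertex is dominated by S or lies in N
  have hdom : ∀ v : V, (∃ s ∈ S, s = v ∨ G.Adj s v) ∨ v ∈ N := by
    intro v
    have hv : v ∈ A ∪ C := by rw [hAC]; trivial
    rcases hv with hv | hv
    · obtain ⟨x, hx, hxv⟩ := hXdom v hv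
      by_cases hxB : x ∈ B
      · right
        refine Set.mem_biUnion hxB ?_
        rcases hxv with rfl | h
        · exact Set.mem_insert _ _
        · exact Set.mem_insert_of_mem _ h
      · exact Or.inl ⟨x, ⟨Or.inl hx, hxB⟩, hxv⟩
    · obtain ⟨y, hy, hyv⟩ := hYdom v hv
      by_cases hyB : y ∈ B
      · right
        refine Set.mem_biUnion hyB ?_
        rcases hyv with rfl | h
        · exact Set.mem_insert _ _
        · exact Set.mem_insert_of_mem _ h
      · exact Or.inl ⟨y, ⟨Or.inr hy, hyB⟩, hyv⟩
  -- maximal independent set containing S within S ∪ N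
  obtain ⟨Z, hSZ, hZmax⟩ := zorn_subset_nonempty
    {I : Set V | S ⊆ I ∧ I ⊆ S ∪ N ∧ IsIndepSet' G I}
    (fun c hcsub hchain hcne => by
      refine ⟨⋃₀ c, ⟨?_, ?_, ?_⟩, fun s hs => Set.subset_sUnion_of_mem hs⟩
      · obtain ⟨t, ht⟩ := hcne
        exact (hcsub ht).1.trans (Set.subset_sUnion_of_mem ht)
      · exact Set.sUnion_subset fun t ht => (hcsub ht).2.1
      · rintro x ⟨t, ht, hxt⟩ y ⟨u, hu, hyu⟩
        rcases hchain.total ht hu with h | h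
        · exact (hcsub hu).2.2 x (h hxt) y hyu
        · exact (hcsub ht).2.2 x hxt y (h hyu))
    S ⟨Set.Subset.rfl, Set.subset_union_left, hSind⟩
  obtain ⟨⟨hSZ', hZsub, hZind⟩, hZm⟩ := hZmax
  refine ⟨Z, ⟨fun _ _ => trivial, hZind, ?_⟩, ?_⟩
  · -- Z dominates
    intro v _
    rcases hdom v with ⟨s, hs, hsv⟩ | hvN
    · exact ⟨s, hSZ' hs, hsv⟩
    by_cases hvZ : v ∈ Z
    · exact ⟨v, hvZ, Or.inl rfl⟩
    by_contra h
    push_neg at h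
    have : insert v Z ∈ {I : Set V | S ⊆ I ∧ I ⊆ S ∪ N ∧ IsIndepSet' G I} := by
      refine ⟨hSZ'.trans (Set.subset_insert _ _),
        Set.insert_subset (Or.inr hvN) hZsub, ?_⟩
      rintro x (rfl | hx) y (rfl | hy)
      · exact fun h' => G.irrefl h'
      · intro h'
        exact (h y hy).2 h'.symm
      · intro h'
        exact (h x hx).2 h'
      · exact hZind x hx y hy
    have := hZm this (Set.subset_insert _ _)
    exact hvZ (this (Set.mem_insert _ _))
  · -- cardinality
    have hNcard : N.ncard ≤ (Δ + 1) * B.ncard := by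
      set F : Finset V := B.toFinset.biUnion
        (fun b => (insert b (G.neighborSet b)).toFinset) with hF
      have hNF : N ⊆ ↑F := by
        intro v hv
        rw [hN] at hv
        obtain ⟨b, hb, hvb⟩ := Set.mem_iUnion₂.mp hv
        simp only [hF, Finset.coe_biUnion, Set.mem_iUnion, Finset.mem_coe,
          Set.mem_toFinset]
        exact ⟨b, hb, hvb⟩
      calc N.ncard ≤ (↑F : Set V).ncard := Set.ncard_le_ncard hNF (Set.toFinite _)
        _ = F.card := Set.ncard_coe_finset F
        _ ≤ ∑ b ∈ B.toFinset, (insert b (G.neighborSet b)).toFinset.card :=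
            Finset.card_biUnion_le
        _ ≤ ∑ _b ∈ B.toFinset, (Δ + 1) := by
            refine Finset.sum_le_sum fun b _ => ?_
            rw [← Set.ncard_eq_toFinset_card']
            exact (Set.ncard_insert_le _ _).trans (Nat.add_le_add_right (hΔ b) 1)
        _ = (Δ + 1) * B.ncard := by
            rw [Finset.sum_const, smul_eq_mul, Set.ncard_eq_toFinset_card' B,
              Nat.mul_comm]
    calc Z.ncard ≤ (S ∪ N).ncard := Set.ncard_le_ncard hZsub (Set.toFinite _)
      _ ≤ S.ncard + N.ncard := Set.ncard_union_le _ _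
      _ ≤ (X.ncard + Y.ncard) + (Δ + 1) * B.ncard := by
          refine Nat.add_le_add ?_ hNcard
          calc S.ncard ≤ (X ∪ Y).ncard := Set.ncard_le_ncard Set.diff_subset (Set.toFinite _)
            _ ≤ X.ncard + Y.ncard := Set.ncard_union_le _ _
      _ = X.ncard + Y.ncard + (Δ + 1) * B.ncard := by ring
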